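/- Let n > 0 and let f : {-1,1}^n → ℝ satisfy E[f] = 0. Write M = ‖f‖_∞ = max_x |f(x)|. Then there exist S ⊆ [n] and b ∈ {-1,1}^{S̄} such that the restriction g = f_{S|b} (fixing coordinates in S̄ to b) satisfies Var(g) ≥ M²/(4n) and |ĝ({i})| ≥ M/(2n) for every i ∈ S. -/

import Mathlib

open Finset

noncomputable section

/-- sign of a bit: `true` ↦ -1 (representing the bit -1), `false` ↦ 1. -/
def bsgn (b : Bool) : ℝ := if b then -1 else 1

/-- character χ_S(x) = ∏_{i ∈ S} x_i on the cube {-1,1}^n. -/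
def chiCube {n : ℕ} (S : Finset (Fin n)) (x : Fin n → Bool) : ℝ := ∏ i ∈ S, bsgn (x i)

/-- expectation under the uniform distribution on a finite type. -/
def expec {α : Type*} [Fintype α] (f : α → ℝ) : ℝ := (∑ x, f x) / (Fintype.card α)

/-- Fourier coefficient f̂(S) = E_x[f(x)·χ_S(x)]. -/
def fhat {n : ℕ} (f : (Fin n → Bool) → ℝ) (S : Finset (Fin n)) : ℝ :=
  expec fun x => f x * chiCube S x

/-- variance under the uniform distribution. -/
def cubeVar {α : Type*} [Fintype α] (f : α → ℝ) : ℝ :=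
  expec (fun x => f x ^ 2) - (expec f) ^ 2

/-- merge: equals `x` on `J` and `z` off `J`. -/
def mergeOn {n : ℕ} (J : Finset (Fin n)) (x z : Fin n → Bool) : Fin n → Bool :=
  fun i => if i ∈ J then x i else z i

namespace StmtAux

variable {n : ℕ}

lemma bsgn_mul_self (c : Bool) : bsgn c * bsgn c = 1 := by cases c <;> norm_num [bsgn]
lemma bsgn_not (c : Bool) : bsgn (!c) = - bsgn c := by cases c <;> norm_num [bsgn]
lemma abs_bsgn (c : Bool) : |bsgn c| = 1 := by cases c <;> norm_num [bsgn]

lemma Npos : (0:ℝ) < (Fintype.card (Fin n → Bool) : ℝ) := by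
  exact_mod_cast Fintype.card_pos

def flip (i : Fin n) (x : Fin n → Bool) : Fin n → Bool := Function.update x i (!x i)

lemma flip_flip (i : Fin n) : Function.Involutive (flip i) := by
  intro x; funext j
  rcases eq_or_ne j i with rfl | h
  · simp [flip]
  · simp [flip, Function.update_of_ne h]

lemma flip_same (i : Fin n) (x : Fin n → Bool) : flip i x i = !x i := by simp [flip]

lemma flip_noteq (i j : Fin n) (h : j ≠ i) (x : Fin n → Bool) : flip i x j = x j := by
  simp [flip, Function.update_of_ne h]

lemma sum_flip (i : Fin n) (F : (Fin n → Bool) → ℝ) :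
    ∑ x, F (flip i x) = ∑ x, F x :=
  Fintype.sum_bijective (flip i) (flip_flip i).bijective _ _ (fun _ => rfl)

lemma sum_eq_zero_of_flip_neg (i : Fin n) (F : (Fin n → Bool) → ℝ)
    (h : ∀ x, F (flip i x) = - F x) : ∑ x, F x = 0 := by
  have h1 := sum_flip i F
  have h2 : ∑ x, F (flip i x) = - ∑ x, F x := by
    rw [← Finset.sum_neg_distrib]
    exact Finset.sum_congr rfl fun x _ => h x
  linarith

lemma sum_bsgn (i : Fin n) : ∑ x : Fin n → Bool, bsgn (x i) = 0 :=
  sum_eq_zero_of_flip_neg i _ (fun x => by rw [flip_same, bsgn_not])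

lemma sum_bsgn_mul (i j : Fin n) :
    ∑ x : Fin n → Bool, bsgn (x i) * bsgn (x j) =
      if i = j then (Fintype.card (Fin n → Bool) : ℝ) else 0 := by
  rcases eq_or_ne i j with rfl | h
  · simp [bsgn_mul_self, Finset.card_univ]
  · rw [if_neg h]
    refine sum_eq_zero_of_flip_neg i _ (fun x => ?_)
    rw [flip_same, flip_noteq i j h.symm, bsgn_not]; ring


lemma fhat_singleton (g : (Fin n → Bool) → ℝ) (i : Fin n) :
    fhat g {i} = (∑ x, g x * bsgn (x i)) / (Fintype.card (Fin n → Bool) : ℝ) := by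
  simp [fhat, chiCube, expec]

lemma expec_const (k : ℝ) : expec (fun _ : Fin n → Bool => k) = k := by
  have hN : (Fintype.card (Fin n → Bool) : ℝ) ≠ 0 := ne_of_gt Npos
  rw [expec, Finset.sum_const, Finset.card_univ, nsmul_eq_mul]
  field_simp

lemma sum_eq_card_mul_expec (g : (Fin n → Bool) → ℝ) :
    ∑ x, g x = (Fintype.card (Fin n → Bool) : ℝ) * expec g := by
  have hN : (Fintype.card (Fin n → Bool) : ℝ) ≠ 0 := ne_of_gt Npos
  rw [expec]; field_simp

lemma sum_centered_sq (g : (Fin n → Bool) → ℝ) :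
    ∑ x, (g x - expec g) ^ 2 = (Fintype.card (Fin n → Bool) : ℝ) * cubeVar g := by
  have hN : (Fintype.card (Fin n → Bool) : ℝ) ≠ 0 := ne_of_gt Npos
  have h1 : ∑ x, (g x - expec g)^2
      = ∑ x, (g x ^2 - 2*expec g * g x + expec g ^2) :=
    Finset.sum_congr rfl fun x _ => by ring
  rw [h1, Finset.sum_add_distrib, Finset.sum_sub_distrib, ← Finset.mul_sum,
    Finset.sum_const, Finset.card_univ, nsmul_eq_mul, sum_eq_card_mul_expec (fun x => g x ^2),
    sum_eq_card_mul_expec g]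
  rw [cubeVar]
  ring

lemma sum_centered_bsgn (g : (Fin n → Bool) → ℝ) (i : Fin n) :
    ∑ x, (g x - expec g) * bsgn (x i)
      = (Fintype.card (Fin n → Bool):ℝ) * fhat g {i} := by
  have hN : (Fintype.card (Fin n → Bool) : ℝ) ≠ 0 := ne_of_gt Npos
  have h1 : ∑ x, (g x - expec g) * bsgn (x i)
      = ∑ x, g x * bsgn (x i) - expec g * ∑ x : Fin n → Bool, bsgn (x i) := by
    rw [Finset.mul_sum, ← Finset.sum_sub_distrib]
    refine Finset.sum_congr rfl fun x _ => ?_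
    ring
  rw [h1, sum_bsgn, fhat_singleton]
  field_simp
  ring

lemma bessel (g : (Fin n → Bool) → ℝ) (S : Finset (Fin n)) :
    ∑ i ∈ S, (fhat g {i})^2 ≤ cubeVar g := by
  set N : ℝ := (Fintype.card (Fin n → Bool) : ℝ) with hNdef
  have hN : 0 < N := Npos
  set μ := expec g with hμ
  set s : (Fin n → Bool) → ℝ := fun x => ∑ i ∈ S, fhat g {i} * bsgn (x i) with hs
  have SB : ∀ j, ∑ x, s x * bsgn (x j)
      = ∑ i ∈ S, fhat g {i} * (if i = j then N else 0) := by
    intro j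
    have h1 : ∀ x, s x * bsgn (x j)
        = ∑ i ∈ S, fhat g {i} * (bsgn (x i) * bsgn (x j)) := by
      intro x; rw [hs, Finset.sum_mul]; exact Finset.sum_congr rfl fun i _ => by ring
    rw [Finset.sum_congr rfl fun x _ => h1 x, Finset.sum_comm]
    refine Finset.sum_congr rfl fun i _ => ?_
    rw [← Finset.mul_sum, sum_bsgn_mul]
  have M1 : ∑ x, (g x - μ) * s x = N * ∑ i ∈ S, (fhat g {i}) ^ 2 := by
    have h1 : ∀ x, (g x - μ) * s x
        = ∑ i ∈ S, fhat g {i} * ((g x - μ) * bsgn (x i)) := by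
      intro x; rw [hs, Finset.mul_sum]; exact Finset.sum_congr rfl fun i _ => by ring
    rw [Finset.sum_congr rfl fun x _ => h1 x, Finset.sum_comm, Finset.mul_sum]
    refine Finset.sum_congr rfl fun i _ => ?_
    rw [← Finset.mul_sum, sum_centered_bsgn]
    ring
  have M2 : ∑ x, s x * s x = N * ∑ i ∈ S, (fhat g {i}) ^ 2 := by
    have h1 : ∀ x, s x * s x = ∑ j ∈ S, fhat g {j} * (s x * bsgn (x j)) := by
      intro x
      calc s x * s x = s x * ∑ j ∈ S, fhat g {j} * bsgn (x j) := rfl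
        _ = ∑ j ∈ S, fhat g {j} * (s x * bsgn (x j)) := by
            rw [Finset.mul_sum]
            refine Finset.sum_congr rfl fun j _ => ?_
            ring
    rw [Finset.sum_congr rfl fun x _ => h1 x, Finset.sum_comm, Finset.mul_sum]
    refine Finset.sum_congr rfl fun j hj => ?_
    rw [← Finset.mul_sum, SB j]
    simp only [mul_ite, mul_zero, Finset.sum_ite_eq' S j, if_pos hj]
    ring
  have EXP : (0:ℝ) ≤ ∑ x, (g x - μ - s x)^2 := Finset.sum_nonneg fun _ _ => sq_nonneg _
  have hexp : ∑ x, (g x - μ - s x)^2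
      = ∑ x, (g x - μ)^2 - 2 * ∑ x, ((g x - μ) * s x) + ∑ x, s x * s x := by
    rw [Finset.mul_sum, ← Finset.sum_sub_distrib, ← Finset.sum_add_distrib]
    exact Finset.sum_congr rfl fun x _ => by ring
  rw [hexp, sum_centered_sq, M1, M2] at EXP
  have hfin : N * (∑ i ∈ S, (fhat g {i})^2) ≤ N * cubeVar g := by linarith
  exact le_of_mul_le_mul_left hfin hN

lemma cubeVar_nonneg (g : (Fin n → Bool) → ℝ) : 0 ≤ cubeVar g := by
  simpa using bessel g ∅


lemma expec_update (g : (Fin n → Bool) → ℝ) (i : Fin n) (c : Bool) :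
    expec (fun x => g (Function.update x i c)) = expec g + bsgn c * fhat g {i} := by
  have hN : (Fintype.card (Fin n → Bool) : ℝ) ≠ 0 := ne_of_gt Npos
  have pw : ∀ x : Fin n → Bool, 2 * g (Function.update x i c)
      = g x + g (flip i x) + (bsgn c * (bsgn (x i) * g x)
          - bsgn c * (bsgn (x i) * g (flip i x))) := by
    intro x
    by_cases h : x i = c
    · have h1 : Function.update x i c = x := by rw [← h]; exact Function.update_eq_self i x
      have h2 : bsgn (x i) = bsgn c := by rw [h]
      rw [h1, h2]
      have h3 : bsgn c * (bsgn c * g x) = g x := by rw [← mul_assoc, bsgn_mul_self, one_mul]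
      have h4 : bsgn c * (bsgn c * g (flip i x)) = g (flip i x) := by
        rw [← mul_assoc, bsgn_mul_self, one_mul]
      rw [h3, h4]; ring
    · have hc : c = !x i := by cases c <;> cases hxi : x i <;> simp_all
      have h1 : Function.update x i c = flip i x := by rw [hc]; rfl
      have h2 : bsgn c * (bsgn (x i) * g x) = - g x := by
        rw [hc, bsgn_not, neg_mul, ← mul_assoc, bsgn_mul_self, one_mul]
      have h2' : bsgn c * (bsgn (x i) * g (flip i x)) = - g (flip i x) := by
        rw [hc, bsgn_not, neg_mul, ← mul_assoc, bsgn_mul_self, one_mul]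
      rw [h1, h2, h2']; ring
  have hflips : ∑ x, g (flip i x) = ∑ x, g x := sum_flip i g
  have hflipb : ∑ x, bsgn (x i) * g (flip i x) = - ∑ x, bsgn (x i) * g x := by
    have e : ∀ x : Fin n → Bool,
        bsgn ((flip i x) i) * g (flip i (flip i x)) = -(bsgn (x i) * g x) := by
      intro x
      rw [flip_flip i x, flip_same, bsgn_not]
      ring
    calc ∑ x, bsgn (x i) * g (flip i x)
        = ∑ x, bsgn ((flip i x) i) * g (flip i (flip i x)) :=
          (sum_flip i fun y => bsgn (y i) * g (flip i y)).symm
      _ = ∑ x, -(bsgn (x i) * g x) := Finset.sum_congr rfl fun x _ => e x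
      _ = - ∑ x, bsgn (x i) * g x := by rw [Finset.sum_neg_distrib]
  have key : ∑ x, g (Function.update x i c)
      = ∑ x, g x + bsgn c * ∑ x, g x * bsgn (x i) := by
    have hsum2 : 2 * ∑ x, g (Function.update x i c)
        = ∑ x, (g x + g (flip i x) + (bsgn c * (bsgn (x i) * g x)
            - bsgn c * (bsgn (x i) * g (flip i x)))) := by
      rw [Finset.mul_sum]
      exact Finset.sum_congr rfl fun x _ => pw x
    rw [Finset.sum_add_distrib, Finset.sum_add_distrib, Finset.sum_sub_distrib,
      ← Finset.mul_sum, ← Finset.mul_sum, hflips, hflipb] at hsum2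
    have hcomm : ∑ x, g x * bsgn (x i) = ∑ x, bsgn (x i) * g x :=
      Finset.sum_congr rfl fun x _ => mul_comm _ _
    rw [hcomm]
    linarith
  rw [show (fun x => g (Function.update x i c)) = fun x => g (Function.update x i c) from rfl]
  rw [expec, key, fhat_singleton, expec]
  ring

lemma rest (f : (Fin n → Bool) → ℝ) (S : Finset (Fin n)) (i : Fin n) (hiS : i ∈ S)
    (b : Fin n → Bool) (c : Bool) :
    (fun x => f (mergeOn (S.erase i) x (Function.update b i c)))
      = fun x => f (mergeOn S (Function.update x i c) b) := by
  funext x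
  congr 1
  funext j
  rcases eq_or_ne j i with rfl | hj
  · simp [mergeOn, hiS]
  · by_cases hjS : j ∈ S <;>
      simp [mergeOn, Finset.mem_erase, hj, hjS, Function.update_of_ne hj]


lemma key (f : (Fin n → Bool) → ℝ) :
    ∀ (m : ℕ) (S : Finset (Fin n)) (b : Fin n → Bool) (A : ℝ) (x₀ : Fin n → Bool),
      S.card = m → 0 ≤ A →
      A ≤ |f (mergeOn S x₀ b) - expec (fun x => f (mergeOn S x b))| →
      ∃ S' : Finset (Fin n), S' ⊆ S ∧ ∃ b' : Fin n → Bool,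
        A ^ 2 / (4 * (m : ℝ)) ≤ cubeVar (fun x => f (mergeOn S' x b')) ∧
        ∀ i ∈ S', A / (2 * (m : ℝ)) ≤ |fhat (fun x => f (mergeOn S' x b')) {i}| := by
  intro m
  induction m with
  | zero =>
    intro S b A x₀ hcard hA hpt
    refine ⟨S, Finset.Subset.refl S, b, ?_, ?_⟩
    · simpa using cubeVar_nonneg (fun x => f (mergeOn S x b))
    · intro i hi
      rw [Finset.card_eq_zero] at hcard
      subst hcard
      simp at hi
  | succ m ih =>
    intro S b A x₀ hcard hA hpt
    have hk1 : (0:ℝ) < (m:ℝ) + 1 := by positivity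
    have hcast : ((m+1 : ℕ) : ℝ) = (m:ℝ) + 1 := by push_cast; ring
    by_cases hall : ∀ i ∈ S, A / (2 * ((m:ℝ)+1)) ≤ |fhat (fun x => f (mergeOn S x b)) {i}|
    · refine ⟨S, Finset.Subset.refl S, b, ?_, ?_⟩
      · have hb := bessel (fun x => f (mergeOn S x b)) S
        have hq0 : 0 ≤ A / (2 * ((m:ℝ)+1)) := by positivity
        have hlow : ∀ i ∈ S, (A / (2 * ((m:ℝ)+1)))^2
            ≤ (fhat (fun x => f (mergeOn S x b)) {i})^2 := by
          intro i hi
          have := pow_le_pow_left₀ hq0 (hall i hi) 2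
          rwa [sq_abs] at this
        have hsum := Finset.card_nsmul_le_sum S _ _ hlow
        rw [nsmul_eq_mul, hcard] at hsum
        have heq : ((m+1:ℕ) : ℝ) * (A / (2 * ((m:ℝ)+1)))^2 = A^2 / (4 * ((m:ℝ)+1)) := by
          rw [hcast]
          field_simp
          ring
        rw [heq] at hsum
        rw [hcast]
        exact le_trans hsum hb
      · intro i hi
        rw [hcast]
        exact hall i hi
    · push_neg at hall
      obtain ⟨i, hiS, hsmall⟩ := hall
      set g : (Fin n → Bool) → ℝ := fun x => f (mergeOn S x b) with hg
      set c : Bool := x₀ i with hc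
      set b' : Fin n → Bool := Function.update b i c with hb'
      set S' : Finset (Fin n) := S.erase i with hS'
      have hrest : (fun x => f (mergeOn S' x b')) = fun x => g (Function.update x i c) :=
        rest f S i hiS b c
      have hexp : expec (fun x => f (mergeOn S' x b')) = expec g + bsgn c * fhat g {i} := by
        rw [hrest]; exact expec_update g i c
      have hx0 : f (mergeOn S' x₀ b') = g x₀ := by
        have := congrFun hrest x₀
        rw [this, hc, Function.update_eq_self]
      have hcard' : S'.card = m := by
        rw [hS', Finset.card_erase_of_mem hiS, hcard]
        omega
      rcases Nat.eq_zero_or_pos m with hm0 | hm1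
      · exfalso
        subst hm0
        have hS'e : S' = ∅ := Finset.card_eq_zero.mp hcard'
        have hmerge : ∀ x : Fin n → Bool, mergeOn S' x b' = b' := by
          intro x; funext j; rw [hS'e]; simp [mergeOn]
        have hconst : expec (fun x => f (mergeOn S' x b')) = g x₀ := by
          rw [← hx0, hmerge x₀]
          have : (fun x : Fin n → Bool => f (mergeOn S' x b')) = fun _ => f b' := by
            funext x; rw [hmerge x]
          rw [this, expec_const]
        have hgeq : g x₀ - expec g = bsgn c * fhat g {i} := by
          have := hexp
          rw [hconst] at this
          linarith
        have habs : |g x₀ - expec g| = |fhat g {i}| := by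
          rw [hgeq, abs_mul, abs_bsgn, one_mul]
        have hpt2 : A ≤ |fhat g {i}| := by
          rw [← habs]; exact hpt
        have hlt : |fhat g {i}| < A / 2 := by
          have h := hsmall
          norm_num at h
          exact h
        have h0f := abs_nonneg (fhat g {i})
        linarith
      · -- m ≥ 1
        set A' : ℝ := A - A / (2 * ((m:ℝ)+1)) with hA'
        have hkm : (1:ℝ) ≤ (m:ℝ) := by exact_mod_cast hm1
        have hkm0 : (0:ℝ) < (m:ℝ) := by linarith
        have hfrac : A / (2 * ((m:ℝ)+1)) ≤ A := by
          apply div_le_self hA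
          linarith
        have hA'0 : 0 ≤ A' := by rw [hA']; linarith
        have hA'eq : A' * (2 * ((m:ℝ)+1)) = A * (2 * (m:ℝ) + 1) := by
          rw [hA']
          field_simp
          ring
        have hpt' : A' ≤ |f (mergeOn S' x₀ b') - expec (fun x => f (mergeOn S' x b'))| := by
          rw [hx0, hexp]
          have h2 : g x₀ - (expec g + bsgn c * fhat g {i})
              = (g x₀ - expec g) - bsgn c * fhat g {i} := by ring
          rw [h2]
          have h1 : |g x₀ - expec g| - |bsgn c * fhat g {i}|
              ≤ |(g x₀ - expec g) - bsgn c * fhat g {i}| := abs_sub_abs_le_abs_sub _ _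
          rw [abs_mul, abs_bsgn, one_mul] at h1
          have hsm : |fhat g {i}| < A / (2 * ((m:ℝ)+1)) := hsmall
          rw [hA']
          linarith
        obtain ⟨S'', hsub, b'', hvar, hcoef⟩ := ih S' b' A' x₀ hcard' hA'0 hpt'
        refine ⟨S'', hsub.trans (Finset.erase_subset i S), b'', ?_, ?_⟩
        · refine le_trans ?_ hvar
          rw [hcast]
          rw [div_le_div_iff₀ (by positivity) (by positivity)]
          have hsq : (A' * (2 * ((m:ℝ)+1)))^2 = (A * (2 * (m:ℝ) + 1))^2 := by rw [hA'eq]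
          nlinarith [sq_nonneg A, hkm0, hsq]
        · intro j hj
          refine le_trans ?_ (hcoef j hj)
          rw [hcast]
          rw [div_le_div_iff₀ (by positivity) (by positivity)]
          nlinarith [hA'eq, hA]


end StmtAux

theorem stmt_8 (n : ℕ) (hn : 0 < n) (f : (Fin n → Bool) → ℝ)
    (h0 : expec f = 0) (M : ℝ)
    (hM : M = univ.sup' Finset.univ_nonempty fun x : Fin n → Bool => |f x|) :
    ∃ (S : Finset (Fin n)) (b : Fin n → Bool),
      cubeVar (fun x => f (mergeOn S x b)) ≥ M ^ 2 / (4 * n) ∧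
      ∀ i ∈ S, |fhat (fun x => f (mergeOn S x b)) {i}| ≥ M / (2 * n) := by
  have hmerge : ∀ (x b : Fin n → Bool), mergeOn Finset.univ x b = x := by
    intro x b; funext j; simp [mergeOn]
  obtain ⟨x₀, _, hx₀⟩ := Finset.exists_mem_eq_sup' Finset.univ_nonempty
    (fun x : Fin n → Bool => |f x|)
  have hMx : M = |f x₀| := by rw [hM, hx₀]
  have hM0 : 0 ≤ M := by rw [hMx]; exact abs_nonneg _
  have hpt : M ≤ |f (mergeOn Finset.univ x₀ (fun _ => false)) -
      expec (fun x => f (mergeOn Finset.univ x (fun _ => false)))| := by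
    have hfun : (fun x => f (mergeOn Finset.univ x (fun _ => false))) = f := by
      funext x; rw [hmerge]
    rw [hmerge, hfun, h0, sub_zero, ← hMx]
  obtain ⟨S, _, b', hvar, hcoef⟩ := StmtAux.key f n Finset.univ (fun _ => false) M x₀
    (by simp) hM0 hpt
  exact ⟨S, b', ge_iff_le.mpr hvar, fun i hi => ge_iff_le.mpr (hcoef i hi)⟩
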